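/- Let k ≥ 2 and n = 2^k. With the variable set Vₙ = Fin (n−1) ⊕ Fin k, the models Nₙ = {τᵢ | i ∈ Fin n} where τᵢ (Sum.inl j) = decide (j.val + 1 = i.val) and τᵢ (Sum.inr b) = false, and the projection set Qₙ = {Sum.inl j | j ∈ Fin (n−1), j.val + 1 is not a power of 2}: Qₙ is a UBS of Qₙ in Nₙ, and every UBS U of Qₙ in Nₙ satisfies Qₙ ⊆ U. Consequently, the smallest UBS of Qₙ in Nₙ is Qₙ itself. -/

import Mathlib

/-- The restriction of an assignment `σ : V → Bool` to the subtype of a set `S ⊆ V`. -/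
def restrict {V : Type*} (S : Set V) (σ : V → Bool) : S → Bool := fun x => σ x.val

/-- `S` is an upper bound support (UBS) of `P` in `M`. -/
def IsUBS {V : Type*} (M : Set (V → Bool)) (P S : Set V) : Prop :=
  ∀ σ₁ ∈ M, ∀ σ₂ ∈ M, restrict S σ₁ = restrict S σ₂ → restrict P σ₁ = restrict P σ₂

/-- The `i`-th model of the formula `ψₙ` of Theorem 2: the x-variable `xⱼ` (for
`j ∈ Fin (n-1)`, representing `x_{j+1}`) is true iff `j + 1 = i`, and all the
y-variables are false. -/
def modelτ (k : ℕ) (i : Fin (2 ^ k)) : (Fin (2 ^ k - 1) ⊕ Fin k) → Bool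
  | Sum.inl j => decide (j.val + 1 = i.val)
  | Sum.inr _ => false

/-- The projection set `Qₙ`: the x-variables `x₁, …, x_{n-1}` excluding those whose
index is a power of 2. -/
def Qset (k : ℕ) : Set (Fin (2 ^ k - 1) ⊕ Fin k) :=
  {v | ∃ j : Fin (2 ^ k - 1), (¬ ∃ m : ℕ, j.val + 1 = 2 ^ m) ∧ v = Sum.inl j}

theorem smallest_UBS_is_Q (k : ℕ) (hk : 2 ≤ k) :
    IsUBS (Set.range (modelτ k)) (Qset k) (Qset k) ∧
    ∀ U : Set (Fin (2 ^ k - 1) ⊕ Fin k),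
      IsUBS (Set.range (modelτ k)) (Qset k) U → Qset k ⊆ U := by
  constructor
  · intro σ₁ _ σ₂ _ h
    exact h
  · intro U hU v hv
    obtain ⟨j, hnp, rfl⟩ := hv
    by_contra hnotU
    have hj1 : j.val + 1 < 2 ^ k := by
      have := j.isLt
      omega
    -- two models: τ_{j+1} and τ_0
    set σ₁ := modelτ k ⟨j.val + 1, hj1⟩ with hσ₁
    set σ₂ := modelτ k ⟨0, by positivity⟩ with hσ₂
    have heqU : restrict U σ₁ = restrict U σ₂ := by
      funext x
      obtain ⟨x, hx⟩ := x
      cases x with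
      | inl j' =>
        simp only [restrict, hσ₁, hσ₂, modelτ]
        have hne : j' ≠ j := by
          rintro rfl; exact hnotU hx
        have : j'.val + 1 ≠ j.val + 1 := by
          intro h; exact hne (Fin.ext (by omega))
        simp [this]
        omega
      | inr b => rfl
    have := hU σ₁ ⟨_, rfl⟩ σ₂ ⟨_, rfl⟩ heqU
    have h2 := congrFun this ⟨Sum.inl j, ⟨j, hnp, rfl⟩⟩
    simp only [restrict, hσ₁, hσ₂, modelτ] at h2
    simp at h2
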